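/- Let $p$ be an odd prime and $G$ the non-abelian group of order $p^3$ and exponent $p$. Let $S$ be a sequence of length $3p-2$ over $G$ with no central terms, such that at least $2p-2$ terms of $S$ lie in a single $z$-class (i.e., lie in $C_G(g) \setminus Z(G)$ for a fixed non-central $g$). Then $S$ has a nonempty product-one subsequence. -/

import Mathlib

section Comb

variable {p : ℕ} {α : Type*}

/-- Davenport constant of `ZMod p`: any `p` terms have a nonempty zero-sum subsequence. -/
lemma st_dav1 [hpf : Fact p.Prime] (M : Multiset α) (f : α → ZMod p) (h : p ≤ Multiset.card M) :
    ∃ N : Multiset α, N ≤ M ∧ N ≠ 0 ∧ (N.map f).sum = 0 := by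
  classical
  set l := M.toList with hldef
  have hl : (l : Multiset α) = M := M.coe_toList
  have hlen : p ≤ l.length := by
    rwa [← Multiset.coe_card, hl]
  have hcard : Fintype.card (ZMod p) < Fintype.card (Fin (p+1)) := by
    simp [ZMod.card]
  obtain ⟨i, j, hne, hij⟩ :=
    Fintype.exists_ne_map_eq_of_card_lt (fun k : Fin (p+1) => ((l.take k).map f).sum) hcard
  wlog hlt : (i : ℕ) < (j : ℕ) generalizing i j
  · have hvne : (i : ℕ) ≠ (j : ℕ) := fun hv => hne (Fin.ext hv)
    exact this j i hne.symm hij.symm (by omega)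
  set N' := (l.take j).drop i with hN'
  have htk : (l.take j).take i = l.take i := by
    rw [List.take_take]; congr 1; omega
  have hsplit : l.take (j : ℕ) = l.take i ++ N' := by
    rw [← htk, List.take_append_drop]
  have hsum : ((N'.map f).sum : ZMod p) = 0 := by
    have := hij
    rw [hsplit, List.map_append, List.sum_append] at this
    -- this : take i sum = take i sum + N' sum
    exact (add_eq_left.mp this.symm)
  have hlenN : 0 < N'.length := by
    rw [hN', List.length_drop, List.length_take]
    have : (j : ℕ) ≤ l.length := le_trans (by omega) hlen
    omega
  refine ⟨(N' : Multiset α), ?_, ?_, ?_⟩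
  · rw [← hl]
    exact Multiset.coe_le.mpr (((List.drop_sublist _ _).trans (List.take_sublist _ _)).subperm)
  · simpa [Multiset.coe_eq_zero] using List.ne_nil_of_length_pos hlenN
  · simpa using hsum

end Comb

section Sums
variable (f : α → ZMod p)

/-- Finset of achievable sublist `f`-sums. -/
def stSums : List α → Finset (ZMod p)
  | [] => {0}
  | x :: l => stSums l ∪ (stSums l).image (f x + ·)

lemma stSums_spec : ∀ (l : List α), ∀ y ∈ stSums f l,
    ∃ l' : List α, l'.Sublist l ∧ (l'.map f).sum = y := by
  intro l
  induction l with
  | nil => intro y hy; refine ⟨[], List.Sublist.refl _, ?_⟩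
           simp only [stSums, Finset.mem_singleton] at hy; simp [hy]
  | cons x l ih =>
    intro y hy
    rw [stSums, Finset.mem_union] at hy
    rcases hy with hy | hy
    · obtain ⟨l', hs, hsum⟩ := ih y hy
      exact ⟨l', hs.trans (List.sublist_cons_self x l), hsum⟩
    · rw [Finset.mem_image] at hy
      obtain ⟨z, hz, rfl⟩ := hy
      obtain ⟨l', hs, hsum⟩ := ih z hz
      exact ⟨x :: l', hs.cons₂ x, by simp [hsum]⟩

lemma stSums_zero_mem : ∀ (l : List α), (0 : ZMod p) ∈ stSums f l := by
  intro l
  induction l with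
  | nil => simp [stSums]
  | cons x l ih => rw [stSums, Finset.mem_union]; exact Or.inl ih

lemma stSums_card [hpf : Fact p.Prime] : ∀ (l : List α), (∀ x ∈ l, f x ≠ 0) →
    min p (l.length + 1) ≤ (stSums f l).card := by
  intro l
  induction l with
  | nil =>
    intro _
    have := hpf.out.pos
    simp only [stSums, Finset.card_singleton, List.length_nil]
    omega
  | cons x l ih =>
    intro hf
    have hfx : f x ≠ 0 := hf x List.mem_cons_self
    have hcs : min p (l.length + 1) ≤ (stSums f l).card :=
      ih (fun y hy => hf y (List.mem_cons_of_mem x hy))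
    set s := stSums f l with hs
    have hsub : s ⊆ stSums f (x :: l) := by
      rw [stSums]; exact Finset.subset_union_left
    by_cases hp : p ≤ s.card
    · calc min p ((x :: l).length + 1) ≤ p := min_le_left _ _
        _ ≤ s.card := hp
        _ ≤ _ := Finset.card_le_card hsub
    · push_neg at hp
      -- then s ∪ image has card ≥ s.card + 1
      have hgrow : s.card + 1 ≤ (stSums f (x :: l)).card := by
        by_contra hcon
        push_neg at hcon
        have heq : s = stSums f (x :: l) :=
          Finset.eq_of_subset_of_card_le hsub (by omega)
        -- s is closed under adding f x
        have hclosed : ∀ y ∈ s, f x + y ∈ s := by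
          intro y hy
          have : f x + y ∈ stSums f (x :: l) := by
            rw [stSums, Finset.mem_union, Finset.mem_image]
            exact Or.inr ⟨y, hy, rfl⟩
          rwa [← heq] at this
        -- hence all multiples of f x are in s
        have hmul : ∀ n : ℕ, (n : ZMod p) * f x ∈ s := by
          intro n
          induction n with
          | zero => simpa using stSums_zero_mem f l
          | succ n ihn =>
            have : ((n : ZMod p) + 1) * f x = f x + (n : ZMod p) * f x := by ring
            rw [Nat.cast_succ, this]
            exact hclosed _ ihn
        have huniv : s = Finset.univ := by
          apply Finset.eq_univ_of_forall
          intro z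
          have := hmul (z * (f x)⁻¹).val
          rwa [ZMod.natCast_val, ZMod.cast_id', id_eq, mul_assoc,
            inv_mul_cancel₀ hfx, mul_one] at this
        rw [huniv, Finset.card_univ, ZMod.card] at hp
        omega
      have : l.length + 1 ≤ s.card := by
        rcases min_cases p (l.length + 1) with ⟨hmin, hle⟩ | ⟨hmin, hle⟩
        · omega
        · omega
      calc min p ((x :: l).length + 1) ≤ l.length + 2 := by
            simp only [List.length_cons]; omega
        _ ≤ s.card + 1 := by omega
        _ ≤ _ := hgrow

/-- Subset sums of ≥ p-1 nonzero elements cover everything. -/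
lemma st_sums_cover [hpf : Fact p.Prime] (l : List α) (hf : ∀ x ∈ l, f x ≠ 0) (hlen : p - 1 ≤ l.length)
    (target : ZMod p) : ∃ l' : List α, l'.Sublist l ∧ (l'.map f).sum = target := by
  have h1 : p ≤ (stSums f l).card := by
    have := stSums_card f l hf
    have hp2 : 2 ≤ p := hpf.out.two_le
    omega
  have h2 : (stSums f l).card ≤ p := by
    simpa [ZMod.card] using Finset.card_le_univ (stSums f l)
  have huniv : stSums f l = Finset.univ :=
    Finset.eq_univ_of_card (stSums f l) (by rw [ZMod.card]; omega)
  exact stSums_spec f l target (by rw [huniv]; exact Finset.mem_univ _)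

end Sums

open MvPolynomial in
/-- Olson's theorem (Davenport constant of `(ZMod p)²`) via Chevalley–Warning,
in the generic two-functional form. -/
lemma st_dav2 [hpf : Fact p.Prime] (M : Multiset α) (f g : α → ZMod p)
    (h : 2 * p - 1 ≤ Multiset.card M) :
    ∃ N : Multiset α, N ≤ M ∧ N ≠ 0 ∧ (N.map f).sum = 0 ∧ (N.map g).sum = 0 := by
  classical
  have hp2 : 2 ≤ p := hpf.out.two_le
  set l := M.toList with hldef
  have hl : (l : Multiset α) = M := M.coe_toList
  have hlen : 2 * p - 1 ≤ l.length := by rwa [← Multiset.coe_card, hl]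
  set n := l.length with hn
  set F : MvPolynomial (Fin n) (ZMod p) :=
    ∑ i : Fin n, (C (f (l.get i)) * (X i) ^ (p - 1)) with hF
  set G : MvPolynomial (Fin n) (ZMod p) :=
    ∑ i : Fin n, (C (g (l.get i)) * (X i) ^ (p - 1)) with hG
  have hdegF : F.totalDegree ≤ p - 1 := by
    refine (totalDegree_finset_sum _ _).trans (Finset.sup_le fun i _ => ?_)
    calc (C (f (l.get i)) * (X i) ^ (p - 1)).totalDegree
        ≤ (C (f (l.get i))).totalDegree + ((X i : MvPolynomial (Fin n) (ZMod p)) ^ (p - 1)).totalDegree :=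
          totalDegree_mul _ _
      _ ≤ p - 1 := by rw [totalDegree_C, totalDegree_X_pow]; omega
  have hdegG : G.totalDegree ≤ p - 1 := by
    refine (totalDegree_finset_sum _ _).trans (Finset.sup_le fun i _ => ?_)
    calc (C (g (l.get i)) * (X i) ^ (p - 1)).totalDegree
        ≤ (C (g (l.get i))).totalDegree + ((X i : MvPolynomial (Fin n) (ZMod p)) ^ (p - 1)).totalDegree :=
          totalDegree_mul _ _
      _ ≤ p - 1 := by rw [totalDegree_C, totalDegree_X_pow]; omega
  have hdeg : F.totalDegree + G.totalDegree < Fintype.card (Fin n) := by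
    rw [Fintype.card_fin]; omega
  have hdvd := char_dvd_card_solutions_of_add_lt p hdeg
  -- the zero solution
  have hevalzero : ∀ (c : Fin n → ZMod p), eval (0 : Fin n → ZMod p)
      (∑ i : Fin n, (C (c i) * (X i) ^ (p - 1))) = 0 := by
    intro c
    rw [map_sum]
    refine Finset.sum_eq_zero fun i _ => ?_
    rw [eval_mul, eval_C, eval_pow, eval_X]
    simp [zero_pow (by omega : p - 1 ≠ 0)]
  have hzero : (eval (0 : Fin n → ZMod p) F = 0 ∧ eval (0 : Fin n → ZMod p) G = 0) :=
    ⟨hevalzero _, hevalzero _⟩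
  set sol : {x : Fin n → ZMod p // eval x F = 0 ∧ eval x G = 0} := ⟨0, hzero⟩ with hsol
  have hpos : 0 < Fintype.card {x : Fin n → ZMod p // eval x F = 0 ∧ eval x G = 0} :=
    Fintype.card_pos_iff.mpr ⟨sol⟩
  have hbig : 1 < Fintype.card {x : Fin n → ZMod p // eval x F = 0 ∧ eval x G = 0} := by
    rcases hdvd with ⟨k, hk⟩
    rcases Nat.eq_zero_or_pos k with rfl | hk1
    · omega
    · calc 1 < p := by omega
        _ ≤ p * k := Nat.le_mul_of_pos_right p hk1
        _ = _ := hk.symm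
  obtain ⟨⟨x, hx1, hx2⟩, hxne⟩ := Fintype.exists_ne_of_one_lt_card hbig sol
  have hxnz : x ≠ 0 := by
    intro h0
    apply hxne
    rw [hsol]
    exact Subtype.ext h0
  -- the index set of nonzero coordinates
  set idx : Finset (Fin n) := Finset.univ.filter (fun i => x i ≠ 0) with hidx
  have hidxne : idx.Nonempty := by
    rw [Function.ne_iff] at hxnz
    obtain ⟨i, hi⟩ := hxnz
    refine ⟨i, ?_⟩
    simp only [hidx, Finset.mem_filter, Finset.mem_univ, true_and]
    simpa using hi
  set N : Multiset α := idx.val.map l.get with hN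
  have hsum : ∀ c : α → ZMod p, eval x (∑ i : Fin n, (C (c (l.get i)) * (X i) ^ (p - 1))) = 0 →
      (N.map c).sum = 0 := by
    intro c hc
    rw [map_sum] at hc
    have : ∀ i ∈ Finset.univ, eval x (C (c (l.get i)) * (X i) ^ (p - 1)) =
        if x i ≠ 0 then c (l.get i) else 0 := by
      intro i _
      rw [eval_mul, eval_C, eval_pow, eval_X]
      by_cases hxi : x i = 0
      · simp [hxi, zero_pow (by omega : p - 1 ≠ 0)]
      · simp [hxi, ZMod.pow_card_sub_one_eq_one hxi]
    rw [Finset.sum_congr rfl this, ← Finset.sum_filter] at hc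
    rw [hN, Multiset.map_map]
    rw [← hc]
    rfl
  refine ⟨N, ?_, ?_, hsum f hx1, hsum g hx2⟩
  · rw [← hl]
    have h1 : idx.val ≤ (Finset.univ : Finset (Fin n)).val := by
      rw [hidx, Finset.filter_val]
      exact Multiset.filter_le _ _
    have h2 : N ≤ (Finset.univ : Finset (Fin n)).val.map l.get := Multiset.map_le_map h1
    have h3 : (Finset.univ : Finset (Fin n)).val.map l.get = (l : Multiset α) := by
      rw [Fin.univ_def]
      show Multiset.map l.get (↑(List.finRange n)) = _
      rw [Multiset.map_coe, List.map_get_finRange]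
    rwa [h3] at h2
  · rw [hN]
    simp only [ne_eq, Multiset.map_eq_zero]
    intro h0
    have hemp : idx = ∅ := Finset.val_eq_zero.mp h0
    rw [hemp] at hidxne
    exact Finset.not_nonempty_empty hidxne

section Triples
variable {p : ℕ}

/-- Shorthand for triples of residues. -/
abbrev VT (p : ℕ) := ZMod p × ZMod p × ZMod p

def lA (l : List (VT p)) : ZMod p := (l.map Prod.fst).sum
def lB (l : List (VT p)) : ZMod p := (l.map (fun x => x.2.1)).sum
def lE0 (l : List (VT p)) : ZMod p := (l.map (fun x => x.2.2)).sum
def lCross : List (VT p) → ZMod p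
  | [] => 0
  | x :: l => x.2.1 * lA l + lCross l
def lE (l : List (VT p)) : ZMod p := lE0 l + lCross l

@[simp] lemma lA_nil : lA ([] : List (VT p)) = 0 := rfl
@[simp] lemma lB_nil : lB ([] : List (VT p)) = 0 := rfl
@[simp] lemma lE0_nil : lE0 ([] : List (VT p)) = 0 := rfl
@[simp] lemma lCross_nil : lCross ([] : List (VT p)) = 0 := rfl
@[simp] lemma lE_nil : lE ([] : List (VT p)) = 0 := by simp [lE]

@[simp] lemma lA_cons (x : VT p) (l : List (VT p)) : lA (x :: l) = x.1 + lA l := by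
  simp [lA]
@[simp] lemma lB_cons (x : VT p) (l : List (VT p)) : lB (x :: l) = x.2.1 + lB l := by
  simp [lB]
@[simp] lemma lE0_cons (x : VT p) (l : List (VT p)) : lE0 (x :: l) = x.2.2 + lE0 l := by
  simp [lE0]
@[simp] lemma lCross_cons (x : VT p) (l : List (VT p)) :
    lCross (x :: l) = x.2.1 * lA l + lCross l := rfl
lemma lE_cons (x : VT p) (l : List (VT p)) :
    lE (x :: l) = x.2.2 + x.2.1 * lA l + lE l := by
  simp [lE]; ring

@[simp] lemma lA_append (u v : List (VT p)) : lA (u ++ v) = lA u + lA v := by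
  simp [lA]
@[simp] lemma lB_append (u v : List (VT p)) : lB (u ++ v) = lB u + lB v := by
  simp [lB]
@[simp] lemma lE0_append (u v : List (VT p)) : lE0 (u ++ v) = lE0 u + lE0 v := by
  simp [lE0]
lemma lCross_append (u v : List (VT p)) :
    lCross (u ++ v) = lCross u + lCross v + lB u * lA v := by
  induction u with
  | nil => simp
  | cons x u ih => simp [ih]; ring
lemma lE_append (u v : List (VT p)) : lE (u ++ v) = lE u + lE v + lB u * lA v := by
  simp [lE, lCross_append]; ring

lemma lCross_eq_zero (l : List (VT p)) (h : ∀ x ∈ l, x.2.1 = 0) : lCross l = 0 := by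
  induction l with
  | nil => rfl
  | cons x l ih =>
    rw [lCross_cons, h x List.mem_cons_self, ih fun y hy => h y (List.mem_cons_of_mem x hy)]
    ring

lemma lB_eq_zero (l : List (VT p)) (h : ∀ x ∈ l, x.2.1 = 0) : lB l = 0 := by
  induction l with
  | nil => rfl
  | cons x l ih =>
    rw [lB_cons, h x List.mem_cons_self, ih fun y hy => h y (List.mem_cons_of_mem x hy)]
    ring

/-- list sums agree with multiset sums -/
lemma lA_coe_sum (l : List (VT p)) : lA l = ((l : Multiset (VT p)).map Prod.fst).sum := by
  simp [lA]
lemma lE0_coe_sum (l : List (VT p)) :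
    lE0 l = ((l : Multiset (VT p)).map (fun x => x.2.2)).sum := by
  simp [lE0]

end Triples

/-- The main combinatorial lemma. -/
lemma st_main {p : ℕ} [hpf : Fact p.Prime] (hp3 : 3 ≤ p) (M : Multiset (VT p))
    (hcard : Multiset.card M = 3 * p - 2)
    (hnc : ∀ x ∈ M, ¬(x.1 = 0 ∧ x.2.1 = 0))
    (hfil : 2 * p - 2 ≤ Multiset.card (M.filter (fun x => x.2.1 = 0))) :
    ∃ l : List (VT p), l ≠ [] ∧ (l : Multiset (VT p)) ≤ M ∧
      lA l = 0 ∧ lB l = 0 ∧ lE l = 0 := by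
  classical
  set M₀ := M.filter (fun x => x.2.1 = 0) with hM₀
  set M₁ := M.filter (fun x => ¬ x.2.1 = 0) with hM₁
  have hsplit : M₀ + M₁ = M := Multiset.filter_add_not _ M
  have hM₀b : ∀ x ∈ M₀, x.2.1 = 0 := by
    intro x hx; rw [hM₀, Multiset.mem_filter] at hx; exact hx.2
  have hM₀a : ∀ x ∈ M₀, x.1 ≠ 0 := by
    intro x hx ha
    rw [hM₀, Multiset.mem_filter] at hx
    exact hnc x hx.1 ⟨ha, hx.2⟩
  have hM₁b : ∀ x ∈ M₁, x.2.1 ≠ 0 := by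
    intro x hx; rw [hM₁, Multiset.mem_filter] at hx; exact hx.2
  have hcards : Multiset.card M₀ + Multiset.card M₁ = 3 * p - 2 := by
    rw [← hcard, ← hsplit, Multiset.card_add]
  by_cases hc1 : 2 * p - 1 ≤ Multiset.card M₀
  · -- Case 1: enough terms in the abelian part; use Olson/Chevalley–Warning
    obtain ⟨N, hNle, hNne, hNf, hNg⟩ := st_dav2 M₀ Prod.fst (fun x => x.2.2) hc1
    refine ⟨N.toList, ?_, ?_, ?_, ?_, ?_⟩
    · simpa [Multiset.toList_eq_nil] using hNne
    · rw [N.coe_toList]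
      exact hNle.trans (Multiset.filter_le _ M)
    · rw [lA_coe_sum, N.coe_toList, hNf]
    · refine lB_eq_zero _ fun x hx => ?_
      exact hM₀b x (Multiset.mem_of_le hNle (Multiset.mem_toList.mp hx))
    · have hb : ∀ x ∈ N.toList, x.2.1 = 0 :=
        fun x hx => hM₀b x (Multiset.mem_of_le hNle (Multiset.mem_toList.mp hx))
      rw [lE, lCross_eq_zero _ hb, lE0_coe_sum, N.coe_toList, hNg, add_zero]
  · -- Case 2: exactly 2p-2 terms with b = 0, p terms with b ≠ 0
    have hc2 : Multiset.card M₀ = 2 * p - 2 := by omega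
    have hc3 : Multiset.card M₁ = p := by omega
    obtain ⟨NJ, hJle, hJne, hJsum⟩ := st_dav1 M₁ (fun x => x.2.1) (by omega)
    set jl := NJ.toList with hjldef
    have hjl : (jl : Multiset (VT p)) = NJ := NJ.coe_toList
    have hjlne : jl ≠ [] := by simpa [hjldef, Multiset.toList_eq_nil] using hJne
    obtain ⟨j₀, jt, hjcons⟩ := List.exists_cons_of_ne_nil hjlne
    have hjmem : ∀ x ∈ jl, x ∈ M₁ := by
      intro x hx
      exact Multiset.mem_of_le hJle (Multiset.mem_toList.mp hx)
    have hβ : j₀.2.1 ≠ 0 := hM₁b _ (hjmem j₀ (by rw [hjcons]; exact List.mem_cons_self))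
    have hBjl : lB jl = 0 := by
      have : lB jl = (NJ.map (fun x => x.2.1)).sum := by rw [← hjl]; simp [lB]
      rw [this, hJsum]
    -- the sequence with b = 0
    set l₀ := M₀.toList with hl₀def
    have hl₀ : (l₀ : Multiset (VT p)) = M₀ := M₀.coe_toList
    have hlen₀ : l₀.length = 2 * p - 2 := by
      rw [← Multiset.coe_card, hl₀]; exact hc2
    have hl₀mem : ∀ x ∈ l₀, x ∈ M₀ := fun x hx => Multiset.mem_toList.mp hx
    set lw := l₀.take (p - 1) with hlw
    set lr := l₀.drop (p - 1) with hlr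
    have hwr : lw ++ lr = l₀ := List.take_append_drop _ _
    have hlwmem : ∀ x ∈ lw, x ∈ M₀ := fun x hx => hl₀mem x ((List.take_sublist _ _).mem hx)
    have hlwlen : p - 1 ≤ lw.length := by
      rw [hlw, List.length_take]; omega
    obtain ⟨w, hwsub, hwsum⟩ := st_sums_cover (Prod.fst) lw
      (fun x hx => hM₀a x (hlwmem x hx)) hlwlen (-(lA jl) - lA lr)
    set Il := w ++ lr with hIl
    have hIlsub : Il.Sublist l₀ := by
      rw [← hwr]; exact hwsub.append_right lr
    have hIlmem : ∀ x ∈ Il, x ∈ M₀ := fun x hx => hl₀mem x (hIlsub.mem hx)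
    have hIlA : lA Il = -(lA jl) := by
      rw [hIl, lA_append]
      have : lA w = -(lA jl) - lA lr := hwsum
      rw [this]; ring
    have hIllen : p - 1 ≤ Il.length := by
      rw [hIl, List.length_append, hlr, List.length_drop]
      omega
    -- choose the subset to position after j₀
    obtain ⟨I₁, hI₁sub, hI₁sum⟩ := st_sums_cover (Prod.fst) Il
      (fun x hx => hM₀a x (hIlmem x hx)) hIllen (-(lE0 Il + lE jl) * (j₀.2.1)⁻¹)
    have hI₁le : (I₁ : Multiset (VT p)) ≤ (Il : Multiset (VT p)) :=
      Multiset.coe_le.mpr hI₁sub.subperm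
    set I₀ := ((Il : Multiset (VT p)) - (I₁ : Multiset (VT p))).toList with hI₀def
    have hI₀ : (I₀ : Multiset (VT p)) = (Il : Multiset (VT p)) - (I₁ : Multiset (VT p)) :=
      Multiset.coe_toList _
    have hI₀add : (I₀ : Multiset (VT p)) + (I₁ : Multiset (VT p)) = (Il : Multiset (VT p)) := by
      rw [hI₀]; exact tsub_add_cancel_of_le hI₁le
    have hI₀mem : ∀ x ∈ I₀, x ∈ M₀ := by
      intro x hx
      apply hIlmem
      have : x ∈ (Il : Multiset (VT p)) :=
        Multiset.mem_of_le (tsub_le_self) (Multiset.mem_toList.mp hx)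
      rwa [Multiset.mem_coe] at this
    have hI₁mem : ∀ x ∈ I₁, x ∈ M₀ := fun x hx => hIlmem x (hI₁sub.mem hx)
    -- sums split along I₀ + I₁ = Il
    have hA0 : lA I₀ + lA I₁ = lA Il := by
      rw [lA_coe_sum, lA_coe_sum, lA_coe_sum, ← hI₀add]
      rw [Multiset.map_add, Multiset.sum_add]
    have hE0 : lE0 I₀ + lE0 I₁ = lE0 Il := by
      rw [lE0_coe_sum, lE0_coe_sum, lE0_coe_sum, ← hI₀add]
      rw [Multiset.map_add, Multiset.sum_add]
    have hB₀ : lB I₀ = 0 := lB_eq_zero _ (fun x hx => hM₀b x (hI₀mem x hx))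
    have hB₁ : lB I₁ = 0 := lB_eq_zero _ (fun x hx => hM₀b x (hI₁mem x hx))
    have hEI₀ : lE I₀ = lE0 I₀ := by
      rw [lE, lCross_eq_zero _ (fun x hx => hM₀b x (hI₀mem x hx)), add_zero]
    have hEI₁ : lE I₁ = lE0 I₁ := by
      rw [lE, lCross_eq_zero _ (fun x hx => hM₀b x (hI₁mem x hx)), add_zero]
    have hI₁A : lA I₁ = -(lE0 Il + lE jl) * (j₀.2.1)⁻¹ := hI₁sum
    have hinv : j₀.2.1 * (j₀.2.1)⁻¹ = 1 := mul_inv_cancel₀ hβ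
    have hjlA : lA jl = j₀.1 + lA jt := by rw [hjcons, lA_cons]
    have hjlB : lB jl = j₀.2.1 + lB jt := by rw [hjcons, lB_cons]
    have hjlE : lE jl = j₀.2.2 + j₀.2.1 * lA jt + lE jt := by rw [hjcons, lE_cons]
    -- assemble the final list
    refine ⟨I₀ ++ j₀ :: (I₁ ++ jt), by simp, ?_, ?_, ?_, ?_⟩
    · have hfe : ((I₀ ++ j₀ :: (I₁ ++ jt) : List (VT p)) : Multiset (VT p))
          = ((Il : Multiset (VT p)) + (NJ : Multiset (VT p))) := by
        have e1 : ((I₀ ++ j₀ :: (I₁ ++ jt) : List (VT p)) : Multiset (VT p))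
            = (I₀ : Multiset (VT p)) + ({j₀} + ((I₁ : Multiset (VT p)) + (jt : Multiset (VT p)))) := by
          rw [← Multiset.coe_add I₀ (j₀ :: (I₁ ++ jt)), ← Multiset.cons_coe,
            ← Multiset.coe_add, ← Multiset.singleton_add]
        have e2 : ((Il : Multiset (VT p)) + (NJ : Multiset (VT p)))
            = ((I₀ : Multiset (VT p)) + (I₁ : Multiset (VT p))) + ({j₀} + (jt : Multiset (VT p))) := by
          rw [← hjl, hjcons, ← Multiset.cons_coe, ← Multiset.singleton_add, ← hI₀add]
        rw [e1, e2]
        abel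
      rw [hfe, ← hsplit]
      have h1 : (Il : Multiset (VT p)) ≤ M₀ := by
        rw [← hl₀]; exact Multiset.coe_le.mpr hIlsub.subperm
      exact add_le_add h1 hJle
    · simp only [lA_append, lA_cons]
      linear_combination hA0 + hIlA - hjlA
    · simp only [lB_append, lB_cons]
      linear_combination hB₀ + hB₁ - hjlB + hBjl
    · have h1 : lE (I₀ ++ j₀ :: (I₁ ++ jt)) =
          lE I₀ + lE (j₀ :: (I₁ ++ jt)) + lB I₀ * lA (j₀ :: (I₁ ++ jt)) := lE_append _ _
      have h2 : lE (j₀ :: (I₁ ++ jt)) = j₀.2.2 + j₀.2.1 * lA (I₁ ++ jt) + lE (I₁ ++ jt) :=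
        lE_cons _ _
      have h3 : lE (I₁ ++ jt) = lE I₁ + lE jt + lB I₁ * lA jt := lE_append _ _
      rw [h1, h2, h3, hEI₀, hEI₁, hB₀, lA_append]
      linear_combination hE0 - hjlE + j₀.2.1 * hI₁A + lA jt * hB₁ - (lE0 Il + lE jl) * hinv

section GroupStruct

variable {p : ℕ} {G : Type*} [Group G] [Fintype G]

open Subgroup

lemma st_center_card (hp : p.Prime) (hcard : Fintype.card G = p ^ 3)
    (hna : ∃ a b : G, a * b ≠ b * a) : Nat.card (Subgroup.center G) = p := by
  haveI : Fact p.Prime := ⟨hp⟩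
  have hnc : Nat.card G = p ^ 3 := by rw [Nat.card_eq_fintype_card, hcard]
  have hdvd : Nat.card (center G) ∣ p ^ 3 := by
    rw [← hnc]; exact Subgroup.card_subgroup_dvd_card _
  obtain ⟨k, hkle, hk⟩ := (Nat.dvd_prime_pow hp).mp hdvd
  have hq : Nat.card G = Nat.card (G ⧸ center G) * Nat.card (center G) :=
    Subgroup.card_eq_card_quotient_mul_card_subgroup _
  have hppos : 0 < p := hp.pos
  interval_cases k
  · -- center trivial, contradiction with nontrivial center of p-group
    haveI : Nontrivial G := by
      rw [← Fintype.one_lt_card_iff_nontrivial, hcard]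
      exact Nat.one_lt_pow (by omega) hp.one_lt
    have hnt := IsPGroup.center_nontrivial (IsPGroup.of_card hnc)
    obtain ⟨⟨z₁, hz₁⟩, ⟨z₂, hz₂⟩, hzne⟩ := hnt
    have h2 : 1 < Nat.card (center G) := by
      haveI : Finite (center G) := Subtype.finite
      exact Finite.one_lt_card_iff_nontrivial.mpr ⟨⟨z₁, hz₁⟩, ⟨z₂, hz₂⟩, hzne⟩
    rw [pow_zero] at hk
    omega
  · rw [hk]; ring
  · -- quotient of order p, cyclic, so G abelian: contradiction
    exfalso
    have hqcard : Nat.card (G ⧸ center G) = p := by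
      rw [hnc, hk] at hq
      have h3 : p * p ^ 2 = Nat.card (G ⧸ center G) * p ^ 2 := by rw [← hq]; ring
      exact (Nat.eq_of_mul_eq_mul_right (pow_pos hp.pos 2) h3).symm
    haveI : IsCyclic (G ⧸ center G) := isCyclic_of_prime_card hqcard
    obtain ⟨a, b, hab⟩ := hna
    exact hab (commutative_of_cyclic_center_quotient (QuotientGroup.mk' (center G))
      (by rw [QuotientGroup.ker_mk']) a b)
  · -- center everything: abelian, contradiction
    exfalso
    have : center G = ⊤ := Subgroup.eq_top_of_card_eq _ (by rw [hk, hnc])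
    obtain ⟨a, b, hab⟩ := hna
    exact hab ((Subgroup.mem_center_iff.mp (this ▸ Subgroup.mem_top b)) a)

lemma st_commutator_center (hp : p.Prime) (hcard : Fintype.card G = p ^ 3)
    (hZ : Nat.card (Subgroup.center G) = p) :
    ∀ x y : G, x * y * x⁻¹ * y⁻¹ ∈ Subgroup.center G := by
  haveI : Fact p.Prime := ⟨hp⟩
  have hnc : Nat.card G = p ^ 3 := by rw [Nat.card_eq_fintype_card, hcard]
  have hq : Nat.card G = Nat.card (G ⧸ center G) * Nat.card (center G) :=
    Subgroup.card_eq_card_quotient_mul_card_subgroup _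
  have hqcard : Nat.card (G ⧸ center G) = p ^ 2 := by
    rw [hnc, hZ] at hq
    have h3 : p ^ 2 * p = Nat.card (G ⧸ center G) * p := by rw [← hq]; ring
    exact (Nat.eq_of_mul_eq_mul_right hp.pos h3).symm
  have hcomm := IsPGroup.commutative_of_card_eq_prime_sq hqcard
  intro x y
  rw [← QuotientGroup.eq_one_iff]
  show ((x * y * x⁻¹ * y⁻¹ : G) : G ⧸ center G) = 1
  rw [QuotientGroup.mk_mul, QuotientGroup.mk_mul, QuotientGroup.mk_mul,
    QuotientGroup.mk_inv, QuotientGroup.mk_inv, hcomm ((x : G ⧸ center G)) (y : G ⧸ center G)]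
  group

lemma st_order_eq (hp : p.Prime) (hexp : Monoid.exponent G = p) {x : G} (hx : x ≠ 1) :
    orderOf x = p := by
  have hdvd : orderOf x ∣ p := by rw [← hexp]; exact Monoid.order_dvd_exponent x
  rcases (Nat.Prime.eq_one_or_self_of_dvd hp _ hdvd) with h | h
  · exact absurd (orderOf_eq_one_iff.mp h) hx
  · exact h

omit [Fintype G] in
lemma st_K1 {t r c : G} (hc : ∀ x : G, c * x = x * c) (hrt : r * t = t * r * c) :
    ∀ m n : ℕ, r ^ n * t ^ m = t ^ m * r ^ n * c ^ (m * n) := by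
  have hct : ∀ k : ℕ, c ^ k * t = t * c ^ k := fun k => ((Commute.pow_left (hc t) k)).eq
  have hcr : ∀ k : ℕ, c ^ k * r = r * c ^ k := fun k => ((Commute.pow_left (hc r) k)).eq
  have key : ∀ m : ℕ, r * t ^ m = t ^ m * r * c ^ m := by
    intro m
    induction m with
    | zero => simp
    | succ m ih =>
      calc r * t ^ (m + 1) = (r * t ^ m) * t := by rw [pow_succ, mul_assoc]
        _ = t ^ m * r * (c ^ m * t) := by rw [ih, mul_assoc]
        _ = t ^ m * (r * t) * c ^ m := by rw [hct m]; group
        _ = t ^ m * (t * r * c) * c ^ m := by rw [hrt]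
        _ = t ^ (m + 1) * r * c ^ (m + 1) := by rw [pow_succ, pow_succ]; group
  intro m n
  induction n with
  | zero => simp
  | succ n ih =>
    calc r ^ (n + 1) * t ^ m = r ^ n * (r * t ^ m) := by rw [pow_succ]; group
      _ = (r ^ n * t ^ m) * r * c ^ m := by rw [key]; group
      _ = t ^ m * r ^ n * (c ^ (m * n) * r) * c ^ m := by rw [ih]; group
      _ = t ^ m * (r ^ n * r) * (c ^ (m * n) * c ^ m) := by rw [hcr]; group
      _ = t ^ m * r ^ (n + 1) * c ^ (m * (n + 1)) := by
          rw [← pow_succ, ← pow_add, Nat.mul_succ]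

end GroupStruct

section Psi

variable {p : ℕ} [hpf : Fact p.Prime] {G : Type*} [Group G]
variable {t r c : G}

omit [Fact p.Prime] in
/-- normal form multiplication in a Heisenberg-type group -/
lemma st_key (hc : ∀ x : G, c * x = x * c) (hrt : r * t = t * r * c)
    (m n k m' n' k' : ℕ) :
    (t ^ m * r ^ n * c ^ k) * (t ^ m' * r ^ n' * c ^ k') =
      t ^ (m + m') * r ^ (n + n') * c ^ (k + k' + m' * n) := by
  have hmove : ∀ (j : ℕ) (x : G), c ^ j * x = x * c ^ j :=
    fun j x => (Commute.pow_left (hc x) j).eq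
  have hmoveR : ∀ (j : ℕ) (x y : G), c ^ j * (x * y) = x * (c ^ j * y) := by
    intro j x y; rw [← mul_assoc, hmove j x, mul_assoc]
  have hKR : ∀ w : G, r ^ n * (t ^ m' * w) = t ^ m' * (r ^ n * (c ^ (m' * n) * w)) := by
    intro w
    rw [← mul_assoc, st_K1 hc hrt m' n, mul_assoc, mul_assoc]
  simp only [mul_assoc]
  rw [hmoveR k (t ^ m'), hmoveR k (r ^ n'), hKR, hmoveR (m' * n) (r ^ n')]
  rw [pow_add t, pow_add r, pow_add c, pow_add c]
  simp only [mul_assoc]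
  congr 2
  rw [← pow_add, ← pow_add, ← pow_add, ← pow_add]
  congr 1
  ring

lemma st_pow_val {x : G} (hx : orderOf x = p) (n : ℕ) :
    x ^ n = x ^ ((n : ZMod p)).val := by
  conv_lhs => rw [← pow_mod_orderOf]
  rw [hx, ZMod.val_natCast]

/-- the coordinate map -/
def stPsi (t r c : G) (x : VT p) : G := t ^ x.1.val * r ^ x.2.1.val * c ^ x.2.2.val

lemma st_psi_mul (hot : orderOf t = p) (hor : orderOf r = p) (hoc : orderOf c = p)
    (hc : ∀ x : G, c * x = x * c) (hrt : r * t = t * r * c) (x y : VT p) :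
    stPsi t r c x * stPsi t r c y =
      stPsi t r c (x.1 + y.1, x.2.1 + y.2.1, x.2.2 + y.2.2 + x.2.1 * y.1) := by
  obtain ⟨a, b, e⟩ := x
  obtain ⟨a', b', e'⟩ := y
  simp only [stPsi]
  rw [st_key hc hrt a.val b.val e.val a'.val b'.val e'.val]
  have hT : t ^ (a.val + a'.val) = t ^ ((a + a' : ZMod p)).val := by
    rw [st_pow_val hot (a.val + a'.val)]
    congr 2
    push_cast [ZMod.natCast_val, ZMod.cast_id]
    ring
  have hR : r ^ (b.val + b'.val) = r ^ ((b + b' : ZMod p)).val := by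
    rw [st_pow_val hor (b.val + b'.val)]
    congr 2
    push_cast [ZMod.natCast_val, ZMod.cast_id]
    ring
  have hC : c ^ (e.val + e'.val + a'.val * b.val)
      = c ^ ((e + e' + b * a' : ZMod p)).val := by
    rw [st_pow_val hoc (e.val + e'.val + a'.val * b.val)]
    congr 2
    push_cast [ZMod.natCast_val, ZMod.cast_id]
    ring
  rw [hT, hR, hC]

lemma st_psi_one : stPsi t r c ((0, 0, 0) : VT p) = 1 := by
  simp [stPsi, ZMod.val_zero]

lemma st_psi_prod (hot : orderOf t = p) (hor : orderOf r = p) (hoc : orderOf c = p)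
    (hc : ∀ x : G, c * x = x * c) (hrt : r * t = t * r * c) (l : List (VT p)) :
    (l.map (stPsi t r c)).prod = stPsi t r c (lA l, lB l, lE l) := by
  induction l with
  | nil =>
    simp only [List.map_nil, List.prod_nil, lA_nil, lB_nil, lE_nil]
    exact st_psi_one.symm
  | cons x l ih =>
    rw [List.map_cons, List.prod_cons, ih, st_psi_mul hot hor hoc hc hrt]
    congr 1
    refine Prod.ext ?_ (Prod.ext ?_ ?_)
    · simp
    · simp
    · show x.2.2 + lE l + x.2.1 * lA l = lE (x :: l)
      rw [lE_cons]; ring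

end Psi

section PsiInj

variable {p : ℕ} [hpf : Fact p.Prime] {G : Type*} [Group G] {t r c : G}

lemma st_psi_inj (hot : orderOf t = p) (hoc : orderOf c = p)
    (hc : ∀ x : G, c * x = x * c) (hrt : r * t = t * r * c)
    (htpow : ∀ N : ℕ, t ^ N ∈ Subgroup.center G → p ∣ N)
    (hcZ : c ∈ Subgroup.center G) :
    Function.Injective (stPsi (p := p) t r c) := by
  have hmove : ∀ (j : ℕ) (x : G), c ^ j * x = x * c ^ j :=
    fun j x => (Commute.pow_left (hc x) j).eq
  have hxt : ∀ m n k : ℕ, (t ^ m * r ^ n * c ^ k) * t = t * (t ^ m * r ^ n * c ^ k) * c ^ n := by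
    intro m n k
    have h1 := st_key hc hrt m n k 1 0 0
    have h2 := st_key hc hrt 1 0 0 m n k
    simp only [pow_zero, pow_one, mul_one, one_mul, Nat.mul_zero, Nat.add_zero, Nat.zero_add,
      Nat.mul_one, Nat.one_mul] at h1 h2
    rw [h1, h2, mul_assoc (t ^ (1 + m) * r ^ n), ← pow_add, Nat.add_comm 1 m]
  intro x y hxy
  obtain ⟨a, b, e⟩ := x
  obtain ⟨a', b', e'⟩ := y
  simp only [stPsi] at hxy
  have hvlt : ∀ u : ZMod p, u.val < p := fun u => ZMod.val_lt u
  -- step 1 : b = b'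
  have hb : b = b' := by
    have h1 := hxt a.val b.val e.val
    have h2 := hxt a'.val b'.val e'.val
    rw [hxy] at h1
    rw [h1] at h2
    have h3 : c ^ b.val = c ^ b'.val := mul_left_cancel h2
    have h4 : b.val ≡ b'.val [MOD p] := by
      have h5 := pow_eq_pow_iff_modEq.mp h3
      rwa [hoc] at h5
    apply ZMod.val_injective p
    unfold Nat.ModEq at h4
    rwa [Nat.mod_eq_of_lt (hvlt b), Nat.mod_eq_of_lt (hvlt b')] at h4
  subst hb
  -- step 2 : cancel r, compare t,c parts
  have hE1 : t ^ a.val * c ^ e.val = t ^ a'.val * c ^ e'.val := by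
    have h1 : t ^ a.val * r ^ b.val * c ^ e.val = t ^ a.val * c ^ e.val * r ^ b.val := by
      rw [mul_assoc, ← hmove e.val (r ^ b.val), ← mul_assoc]
    have h2 : t ^ a'.val * r ^ b.val * c ^ e'.val = t ^ a'.val * c ^ e'.val * r ^ b.val := by
      rw [mul_assoc, ← hmove e'.val (r ^ b.val), ← mul_assoc]
    rw [h1, h2] at hxy
    exact mul_right_cancel hxy
  have hcp : c ^ p = 1 := by rw [← hoc]; exact pow_orderOf_eq_one c
  have htp : t ^ p = 1 := by rw [← hot]; exact pow_orderOf_eq_one t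
  have hE2 : t ^ (p - a'.val + a.val) = c ^ (e'.val + (p - e.val)) := by
    have := congrArg (fun z => t ^ (p - a'.val) * z * c ^ (p - e.val)) hE1
    calc t ^ (p - a'.val + a.val)
        = t ^ (p - a'.val) * t ^ a.val * (c ^ e.val * c ^ (p - e.val)) := by
          rw [← pow_add, ← pow_add]
          have : e.val + (p - e.val) = p := by have := hvlt e; omega
          rw [this, hcp, mul_one]
      _ = t ^ (p - a'.val) * (t ^ a.val * c ^ e.val) * c ^ (p - e.val) := by
          simp only [mul_assoc]
      _ = t ^ (p - a'.val) * (t ^ a'.val * c ^ e'.val) * c ^ (p - e.val) := by rw [hE1]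
      _ = (t ^ (p - a'.val) * t ^ a'.val) * (c ^ e'.val * c ^ (p - e.val)) := by
          simp only [mul_assoc]
      _ = c ^ (e'.val + (p - e.val)) := by
          rw [← pow_add, ← pow_add]
          have h5 : p - a'.val + a'.val = p := by have := hvlt a'; omega
          rw [h5, htp, one_mul]
  have ha : a = a' := by
    have hmem : t ^ (p - a'.val + a.val) ∈ Subgroup.center G := by
      rw [hE2]
      exact Subgroup.pow_mem _ hcZ _
    have hdvd := htpow _ hmem
    have h1 := hvlt a; have h2 := hvlt a'
    apply ZMod.val_injective p
    have hpd : p - a'.val + a.val = p := by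
      rcases hdvd with ⟨k, hk⟩
      have hppos := hpf.out.pos
      have hk0 : k ≠ 0 := by rintro rfl; omega
      have hk2 : k < 2 := by
        by_contra hge
        push_neg at hge
        have := Nat.mul_le_mul_left p hge
        omega
      have hk1 : k = 1 := by omega
      subst hk1
      omega
    omega
  subst ha
  have he : e = e' := by
    have h3 : c ^ e.val = c ^ e'.val := mul_left_cancel hE1
    have h4 : e.val ≡ e'.val [MOD p] := by
      have h5 := pow_eq_pow_iff_modEq.mp h3
      rwa [hoc] at h5
    apply ZMod.val_injective p
    unfold Nat.ModEq at h4
    rwa [Nat.mod_eq_of_lt (hvlt e), Nat.mod_eq_of_lt (hvlt e')] at h4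
  exact congrArg (fun z => ((a, b, z) : VT p)) he

end PsiInj

lemma st_sub_eq {G : Type*} [Group G] [Fintype G] {H K : Subgroup G} (hle : H ≤ K)
    (hc : Nat.card K ≤ Nat.card H) : H = K := by
  apply SetLike.coe_injective
  apply Set.eq_of_subset_of_ncard_le (SetLike.coe_subset_coe.mpr hle) ?_ (Set.toFinite _)
  rw [← Nat.card_coe_set_eq, ← Nat.card_coe_set_eq]
  exact hc

/-- A sequence (multiset) over `G` has a product-one subsequence if some nonempty
list of its terms (a sub-multiset) multiplies to the identity. -/
def HasProdOneSubseq {G : Type*} [Group G] (S : Multiset G) : Prop :=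
  ∃ l : List G, l ≠ [] ∧ (l : Multiset G) ≤ S ∧ l.prod = 1

theorem stmt_10 (p : ℕ) (hp : p.Prime) (hodd : Odd p)
    {G : Type*} [Group G] [Fintype G]
    (hcard : Fintype.card G = p ^ 3)
    (hexp : Monoid.exponent G = p)
    (hna : ∃ a b : G, a * b ≠ b * a)
    (S : Multiset G) (hlen : Multiset.card S = 3 * p - 2)
    (hnocen : ∀ s ∈ S, s ∉ Subgroup.center G)
    (g : G) (hg : g ∉ Subgroup.center G)
    (hclass : ∃ T : Multiset G, T ≤ S ∧ 2 * p - 2 ≤ Multiset.card T ∧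
      ∀ t ∈ T, t ∈ (Subgroup.centralizer {g} : Set G) \ (Subgroup.center G : Set G)) :
    HasProdOneSubseq S := by
  classical
  haveI hpf : Fact p.Prime := ⟨hp⟩
  have hp3 : 3 ≤ p := by
    rcases hodd with ⟨k, hk⟩
    have := hp.two_le
    omega
  have hnc : Nat.card G = p ^ 3 := by rw [Nat.card_eq_fintype_card, hcard]
  have hZcard : Nat.card (Subgroup.center G) = p := st_center_card hp hcard hna
  have hcommZ := st_commutator_center hp hcard hZcard
  obtain ⟨T, hTS, hTcard, hTmem⟩ := hclass
  have hTne : T ≠ 0 := by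
    intro h
    rw [h] at hTcard
    simp only [Multiset.card_zero] at hTcard
    omega
  obtain ⟨t, ht⟩ := Multiset.exists_mem_of_ne_zero hTne
  have htC : t ∈ Subgroup.centralizer {g} := (hTmem t ht).1
  have htZ : t ∉ Subgroup.center G := (hTmem t ht).2
  set C := Subgroup.centralizer ({g} : Set G) with hC
  have hgC : g ∈ C := Subgroup.mem_centralizer_singleton_iff.mpr rfl
  have hZleC : Subgroup.center G ≤ C := Subgroup.center_le_centralizer {g}
  have hCnetop : C ≠ ⊤ := by
    intro htop
    apply hg
    rw [Subgroup.mem_center_iff]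
    intro y
    have hy : y ∈ C := by rw [htop]; exact Subgroup.mem_top y
    exact Subgroup.mem_centralizer_singleton_iff.mp hy
  -- card C = p ^ 2
  have hsubcard : ∀ H : Subgroup G, H ≠ ⊤ → Subgroup.center G ≤ H →
      (∃ x, x ∈ H ∧ x ∉ Subgroup.center G) → Nat.card H = p ^ 2 := by
    intro H hne hZle ⟨x, hxH, hxZ⟩
    have hdvd : Nat.card H ∣ p ^ 3 := by
      rw [← hnc]; exact Subgroup.card_subgroup_dvd_card _
    obtain ⟨k, hkle, hk⟩ := (Nat.dvd_prime_pow hp).mp hdvd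
    interval_cases k
    · exfalso
      have := Subgroup.card_le_of_le hZle
      rw [hZcard, hk, pow_zero] at this
      omega
    · exfalso
      have h1 := Subgroup.card_le_of_le hZle
      rw [hZcard, hk, pow_one] at h1
      have heq : Subgroup.center G = H := st_sub_eq hZle (by rw [hZcard, hk, pow_one])
      exact hxZ (heq ▸ hxH)
    · exact hk
    · exfalso
      exact hne (Subgroup.eq_top_of_card_eq _ (by rw [hk, hnc]))
  have hCcard : Nat.card C = p ^ 2 := hsubcard C hCnetop hZleC ⟨g, hgC, hg⟩
  -- C is abelian
  have hCab : ∀ x ∈ C, ∀ y ∈ C, x * y = y * x := by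
    have := IsPGroup.commutative_of_card_eq_prime_sq hCcard
    intro x hx y hy
    have h2 := this ⟨x, hx⟩ ⟨y, hy⟩
    exact Subtype.ext_iff.mp h2
  -- centralizer of t is C
  have hCle : C ≤ Subgroup.centralizer {t} := by
    intro x hx
    exact Subgroup.mem_centralizer_singleton_iff.mpr (hCab x hx t htC)
  have htne : Subgroup.centralizer ({t} : Set G) ≠ ⊤ := by
    intro htop
    apply htZ
    rw [Subgroup.mem_center_iff]
    intro y
    have hy : y ∈ Subgroup.centralizer ({t} : Set G) := by rw [htop]; exact Subgroup.mem_top y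
    exact Subgroup.mem_centralizer_singleton_iff.mp hy
  have hCt : Subgroup.centralizer ({t} : Set G) = C := by
    have h1 : Nat.card (Subgroup.centralizer ({t} : Set G)) = p ^ 2 :=
      hsubcard _ htne (Subgroup.center_le_centralizer {t})
        ⟨t, Subgroup.mem_centralizer_singleton_iff.mpr rfl, htZ⟩
    exact (st_sub_eq hCle (by rw [h1, hCcard])).symm
  -- pick r outside C
  have hrex : ∃ r : G, r ∉ C := by
    by_contra hcon
    push_neg at hcon
    exact hCnetop ((Subgroup.eq_top_iff' C).mpr hcon)
  obtain ⟨r, hr⟩ := hrex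
  set c := r⁻¹ * t⁻¹ * r * t with hcdef
  have hrt : r * t = t * r * c := by rw [hcdef]; group
  have hcZ : c ∈ Subgroup.center G := by
    have := hcommZ r⁻¹ t⁻¹
    simpa [inv_inv] using this
  have hc : ∀ x : G, c * x = x * c := fun x => (Subgroup.mem_center_iff.mp hcZ x).symm
  have hcne : c ≠ 1 := by
    intro h1
    apply hr
    rw [← hCt, Subgroup.mem_centralizer_singleton_iff]
    rw [h1, mul_one] at hrt
    exact hrt
  -- orders
  have hone : (1 : G) ∈ Subgroup.center G := Subgroup.one_mem _
  have hot : orderOf t = p := st_order_eq hp hexp (fun h => htZ (h ▸ hone))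
  have hor : orderOf r = p := st_order_eq hp hexp (fun h => hr (h ▸ Subgroup.one_mem C))
  have hoc : orderOf c = p := st_order_eq hp hexp hcne
  -- powers of t in the center force divisibility
  have htpow : ∀ N : ℕ, t ^ N ∈ Subgroup.center G → p ∣ N := by
    intro N hN
    by_contra hnd
    apply htZ
    have hu : (N : ZMod p) ≠ 0 := by
      rwa [Ne, ZMod.natCast_eq_zero_iff]
    set k := ((N : ZMod p)⁻¹).val with hk
    have h1 : ((N * k : ℕ) : ZMod p) = 1 := by
      push_cast [hk, ZMod.natCast_val, ZMod.cast_id]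
      exact mul_inv_cancel₀ hu
    have h2 : N * k ≡ 1 [MOD p] := by
      have := (ZMod.natCast_eq_natCast_iff (N * k) 1 p).mp (by rw [h1]; simp)
      exact this
    have h3 : t ^ (N * k) = t := by
      rw [← pow_mod_orderOf, hot]
      unfold Nat.ModEq at h2
      rw [h2, Nat.mod_eq_of_lt (by omega), pow_one]
    rw [← h3, pow_mul]
    exact Subgroup.pow_mem _ hN k
  -- the coordinate bijection
  set ψ : VT p → G := stPsi t r c with hψ
  have hinj : Function.Injective ψ := st_psi_inj hot hoc hc hrt htpow hcZ
  have hbij : Function.Bijective ψ := by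
    rw [Fintype.bijective_iff_injective_and_card]
    refine ⟨hinj, ?_⟩
    rw [hcard]
    simp [ZMod.card]
    ring
  set E := Equiv.ofBijective ψ hbij with hE
  set F : G → VT p := fun s => E.symm s with hF
  have hFψ : ∀ s : G, ψ (F s) = s := fun s => E.apply_symm_apply s
  -- membership characterizations
  have hmove : ∀ (j : ℕ) (x : G), c ^ j * x = x * c ^ j :=
    fun j x => (Commute.pow_left (hc x) j).eq
  have hxt : ∀ m n k : ℕ, (t ^ m * r ^ n * c ^ k) * t = t * (t ^ m * r ^ n * c ^ k) * c ^ n := by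
    intro m n k
    have h1 := st_key hc hrt m n k 1 0 0
    have h2 := st_key hc hrt 1 0 0 m n k
    simp only [pow_zero, pow_one, mul_one, one_mul, Nat.mul_zero, Nat.add_zero, Nat.zero_add,
      Nat.mul_one, Nat.one_mul] at h1 h2
    rw [h1, h2, mul_assoc (t ^ (1 + m) * r ^ n), ← pow_add, Nat.add_comm 1 m]
  have hcpow_ne : ∀ u : ZMod p, u ≠ 0 → c ^ u.val ≠ 1 := by
    intro u hu h1
    have hdvd := orderOf_dvd_of_pow_eq_one h1
    rw [hoc] at hdvd
    have hv0 : u.val = 0 := Nat.eq_zero_of_dvd_of_lt hdvd (ZMod.val_lt u)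
    exact hu (by rwa [← ZMod.val_eq_zero])
  have hpsiC : ∀ x : VT p, x.2.1 = 0 → ψ x ∈ C := by
    intro x hb
    show stPsi t r c x ∈ C
    rw [stPsi, hb]
    simp only [ZMod.val_zero, pow_zero, mul_one]
    exact Subgroup.mul_mem _ (Subgroup.pow_mem _ htC _) (Subgroup.pow_mem _ (hZleC hcZ) _)
  have hCb : ∀ x : VT p, ψ x ∈ C → x.2.1 = 0 := by
    intro x hx
    by_contra hb
    have h1 : ψ x * t = t * ψ x * c ^ (x.2.1.val) := hxt _ _ _
    have h2 : ψ x * t = t * ψ x := by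
      rw [← hCt] at hx
      exact Subgroup.mem_centralizer_singleton_iff.mp hx
    rw [h2] at h1
    exact hcpow_ne _ hb (left_eq_mul.mp h1)
  have hpsiZ : ∀ x : VT p, x.1 = 0 → x.2.1 = 0 → ψ x ∈ Subgroup.center G := by
    intro x ha hb
    show stPsi t r c x ∈ _
    rw [stPsi, ha, hb]
    simp only [ZMod.val_zero, pow_zero, one_mul, mul_one]
    exact Subgroup.pow_mem _ hcZ _
  have hZab : ∀ x : VT p, ψ x ∈ Subgroup.center G → x.1 = 0 ∧ x.2.1 = 0 := by
    intro x hx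
    have hb : x.2.1 = 0 := hCb x (hZleC hx)
    refine ⟨?_, hb⟩
    by_contra ha
    -- ψ x = t^a * c^e ; commutator with r is c^a ≠ 1
    have hx1 : ψ x = t ^ x.1.val * c ^ x.2.2.val := by
      show stPsi t r c x = _
      rw [stPsi, hb]
      simp [ZMod.val_zero]
    have hK' : r * t ^ x.1.val = t ^ x.1.val * r * c ^ x.1.val := by
      have hK := st_K1 hc hrt x.1.val 1
      rwa [pow_one, Nat.mul_one] at hK
    have h1 : r * (t ^ x.1.val * c ^ x.2.2.val) = (t ^ x.1.val * c ^ x.2.2.val) * r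
        * c ^ (x.1.val) := by
      calc r * (t ^ x.1.val * c ^ x.2.2.val)
          = (t ^ x.1.val * r * c ^ x.1.val) * c ^ x.2.2.val := by rw [← mul_assoc, hK']
        _ = t ^ x.1.val * r * c ^ (x.1.val + x.2.2.val) := by
            rw [mul_assoc (t ^ x.1.val * r), ← pow_add]
        _ = t ^ x.1.val * r * c ^ (x.2.2.val + x.1.val) := by rw [Nat.add_comm]
        _ = t ^ x.1.val * (r * c ^ x.2.2.val) * c ^ x.1.val := by
            rw [pow_add]
            simp only [mul_assoc]
        _ = (t ^ x.1.val * c ^ x.2.2.val) * r * c ^ x.1.val := by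
            rw [← hmove x.2.2.val r]
            simp only [mul_assoc]
    have h2 : r * ψ x = ψ x * r := (Subgroup.mem_center_iff.mp hx r)
    rw [hx1] at h2
    rw [h2] at h1
    exact hcpow_ne _ ha (left_eq_mul.mp h1)
  -- transfer to coordinates
  set M : Multiset (VT p) := S.map F with hM
  have hMcard : Multiset.card M = 3 * p - 2 := by rw [hM, Multiset.card_map, hlen]
  have hMnc : ∀ x ∈ M, ¬(x.1 = 0 ∧ x.2.1 = 0) := by
    intro x hx ⟨ha, hb⟩
    rw [hM, Multiset.mem_map] at hx
    obtain ⟨s, hs, rfl⟩ := hx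
    exact hnocen s hs (by rw [← hFψ s]; exact hpsiZ _ ha hb)
  have hMfil : 2 * p - 2 ≤ Multiset.card (M.filter (fun x => x.2.1 = 0)) := by
    have hle : T.map F ≤ M.filter (fun x => x.2.1 = 0) := by
      rw [Multiset.le_filter]
      constructor
      · rw [hM]; exact Multiset.map_le_map hTS
      · intro x hx
        rw [Multiset.mem_map] at hx
        obtain ⟨s, hs, rfl⟩ := hx
        apply hCb
        rw [hFψ s]
        exact (hTmem s hs).1
    calc 2 * p - 2 ≤ Multiset.card (T.map F) := by rw [Multiset.card_map]; exact hTcard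
      _ ≤ _ := Multiset.card_le_card hle
  obtain ⟨l, hlne, hlle, hlA, hlB, hlE⟩ := st_main hp3 M hMcard hMnc hMfil
  refine ⟨l.map ψ, ?_, ?_, ?_⟩
  · simpa using hlne
  · have h1 : ((l.map ψ : List G) : Multiset G) = Multiset.map ψ (l : Multiset (VT p)) :=
      (Multiset.map_coe ψ l).symm
    rw [h1]
    have h2 : Multiset.map ψ (l : Multiset (VT p)) ≤ Multiset.map ψ M :=
      Multiset.map_le_map hlle
    have h3 : Multiset.map ψ M = S := by
      rw [hM, Multiset.map_map]
      have hcompid : ψ ∘ F = id := funext hFψ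
      rw [hcompid, Multiset.map_id]
    rwa [h3] at h2
  · rw [st_psi_prod hot hor hoc hc hrt, hlA, hlB, hlE]
    exact st_psi_one
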